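/- arXiv:1601.03107 — 2 statements merged into one kernel-verified Lean document; each statement's English description precedes it below -/
import Mathlib

section
/- Positivity of the type B persistence diagram: let F be an S-constructible persistence module valued in an (essentially small) abelian category C, with S = {s_1 < ... < s_n}, and let F_B : Dgm → B(C) be the Möbius inversion of the rank function dF_B(I) = π([image F(p < q')]) (values of the image of the structure map over I, pushed to the Grothendieck group B(C)). Then F_B(I) ⪰ 0 for every I ∈ Dgm; specifically, for I = [s_i, s_j), F_B(I) is the class in B(C) of the quotient (image F(s_i < s_j−δ) ∩ ker F(s_j−δ < s_{j+1}−δ)) / (image F(s_{i−1} < s_j−δ) ∩ ker F(s_j−δ < s_{j+1}−δ)) for sufficiently small δ > 0, hence lies in the positive cone. -/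
open CategoryTheory CategoryTheory.Limits
open scoped Classical

/-- The poset `Dgm`: half-open intervals `[p,q)` with `p<q` together with `[p,∞)`. -/
def Dgm : Type := {x : ℝ × EReal // (x.1 : EReal) < x.2}

/-- The half-open interval `[p,q)`. -/
def Dgm.mkI (p q : ℝ) (h : p < q) : Dgm :=
  ⟨(p, (q : EReal)), by simpa using EReal.coe_lt_coe_iff.mpr h⟩

/-- The half-infinite interval `[p,∞)`. -/
noncomputable def Dgm.mkInf (p : ℝ) : Dgm := ⟨(p, ⊤), by simp⟩

variable (C : Type) [SmallCategory C] [Abelian C]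

/-- Isomorphism classes of objects of `C`. -/
abbrev Cls : Type := Quotient (isIsomorphicSetoid C)

/-- Relations coming from short exact sequences in `C`. -/
def BRel : Set (FreeAbelianGroup (Cls C)) :=
  {x | ∃ S : ShortComplex C, S.ShortExact ∧
    x = FreeAbelianGroup.of ⟦S.X₂⟧ - FreeAbelianGroup.of ⟦S.X₁⟧ - FreeAbelianGroup.of ⟦S.X₃⟧}

/-- The Grothendieck group `B(C)` of the abelian category `C`. -/
def BGroup : Type := FreeAbelianGroup (Cls C) ⧸ AddSubgroup.closure (BRel C)

instance : AddCommGroup (BGroup C) :=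
  inferInstanceAs (AddCommGroup (FreeAbelianGroup (Cls C) ⧸ AddSubgroup.closure (BRel C)))

/-- The class of an object of `C` in `B(C)`. -/
def clsB (a : C) : BGroup C := QuotientAddGroup.mk (FreeAbelianGroup.of ⟦a⟧)

/-- The translation-invariant partial order on `B(C)`: the positive cone is generated by
classes of objects. -/
def leB (x y : BGroup C) : Prop :=
  y - x ∈ AddSubmonoid.closure (Set.range (clsB C))

/-- The "rank function" `d F_B : Dgm → B(C)`: the class of the image of the structure map
of `F` across an interval, using the constructibility conventions (`δ` below a right
endpoint lying in `S = {s 1 < ⋯ < s n}`, and `s (n+1)` as terminal value for `[p,∞)`). -/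
noncomputable def dFB (n : ℕ) (s : ℕ → ℝ) (δ : ℝ) (F : ℝ ⥤ C) (I : Dgm) : BGroup C :=
  if I.1.2 = ⊤ then
    clsB C (image (F.map (homOfLE (le_max_left I.1.1 (s (n + 1))))))
  else if ∃ i : ℕ, 1 ≤ i ∧ i ≤ n ∧ (s i : EReal) = I.1.2 then
    clsB C (image (F.map (homOfLE (le_max_left I.1.1 (I.1.2.toReal - δ)))))
  else
    clsB C (image (F.map (homOfLE (le_max_left I.1.1 I.1.2.toReal))))


section AuxLemmas

variable {C : Type} [SmallCategory C] [Abelian C]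

lemma clsB_congr {a b : C} (e : a ≅ b) : clsB C a = clsB C b :=
  congrArg (fun x => (QuotientAddGroup.mk x : BGroup C))
    (congrArg FreeAbelianGroup.of (Quotient.sound ⟨e⟩))

lemma clsB_ses (S : ShortComplex C) (hS : S.ShortExact) :
    clsB C S.X₂ = clsB C S.X₁ + clsB C S.X₃ := by
  have h : FreeAbelianGroup.of (⟦S.X₂⟧ : Cls C) - FreeAbelianGroup.of ⟦S.X₁⟧
      - FreeAbelianGroup.of ⟦S.X₃⟧ ∈ AddSubgroup.closure (BRel C) :=
    AddSubgroup.subset_closure ⟨S, hS, rfl⟩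
  have h2 : (QuotientAddGroup.mk (FreeAbelianGroup.of (⟦S.X₂⟧ : Cls C)
      - FreeAbelianGroup.of ⟦S.X₁⟧ - FreeAbelianGroup.of ⟦S.X₃⟧) : BGroup C) = 0 :=
    (QuotientAddGroup.eq_zero_iff _).mpr h
  have h3 : clsB C S.X₂ - clsB C S.X₁ - clsB C S.X₃ = 0 := by
    exact h2
  rw [sub_sub, sub_eq_zero] at h3; exact h3

lemma clsB_ker_im {A B : C} (u : A ⟶ B) :
    clsB C A = clsB C (kernel u) + clsB C (image u) := by
  have w : kernel.ι u ≫ factorThruImage u = 0 := by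
    rw [← cancel_mono (image.ι u)]
    simp
  refine clsB_ses (ShortComplex.mk (kernel.ι u) (factorThruImage u) w) ?_
  exact ShortComplex.ShortExact.mk'
    (ShortComplex.exact_of_f_is_kernel _
      (isKernelOfComp (image.ι u) u (kernelIsKernel u) w (image.fac u)))
    inferInstance inferInstance

lemma clsB_mono {A B : C} (m : A ⟶ B) [Mono m] :
    clsB C B = clsB C A + clsB C (cokernel m) :=
  clsB_ses (ShortComplex.mk m (cokernel.π m) (cokernel.condition m))
    (ShortComplex.ShortExact.mk'
      (ShortComplex.exact_of_g_is_cokernel _ (cokernelIsCokernel m))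
      inferInstance inferInstance)

lemma clsB_image_step {Y Z W : C} (g : Y ⟶ Z) (h : Z ⟶ W) :
    clsB C (image g) = clsB C (kernel (image.ι g ≫ h)) + clsB C (image (g ≫ h)) := by
  have hiso : IsIso (image.preComp (factorThruImage g) (image.ι g ≫ h)) :=
    isIso_of_mono_of_epi _
  have e1 : clsB C (image (image.ι g ≫ h)) = clsB C (image (g ≫ h)) := by
    have h2 : factorThruImage g ≫ (image.ι g ≫ h) = g ≫ h := by simp
    calc clsB C (image (image.ι g ≫ h))
        = clsB C (image (factorThruImage g ≫ (image.ι g ≫ h))) :=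
          (clsB_congr (asIso (image.preComp _ _))).symm
      _ = clsB C (image (g ≫ h)) := by rw [h2]
  rw [← e1]
  exact clsB_ker_im _

lemma clsB_quad {X Y Z W : C} (f : X ⟶ Y) (g : Y ⟶ Z) (h : Z ⟶ W) :
    ∃ G : C, clsB C (image g) - clsB C (image (g ≫ h))
      + clsB C (image ((f ≫ g) ≫ h)) - clsB C (image (f ≫ g)) = clsB C G := by
  set u₁ := image.ι g ≫ h with hu₁
  set u₂ := image.ι (f ≫ g) ≫ h with hu₂
  have hcond : (kernel.ι u₂ ≫ image.preComp f g) ≫ u₁ = 0 := by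
    rw [hu₁, Category.assoc, ← Category.assoc (image.preComp f g),
      image.preComp_ι, ← hu₂, kernel.condition]
  have hφι : kernel.lift u₁ _ hcond ≫ kernel.ι u₁ = kernel.ι u₂ ≫ image.preComp f g :=
    kernel.lift_ι _ _ _
  have : Mono (kernel.lift u₁ _ hcond) := by
    have : Mono (kernel.lift u₁ _ hcond ≫ kernel.ι u₁) := by
      rw [hφι]; infer_instance
    exact mono_of_mono _ (kernel.ι u₁)
  refine ⟨cokernel (kernel.lift u₁ _ hcond), ?_⟩
  have h1 := clsB_image_step g h
  have h2 := clsB_image_step (f ≫ g) h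
  have h3 := clsB_mono (kernel.lift u₁ _ hcond)
  rw [h1, h2, h3]
  abel

lemma clsB_pair {X Y Z : C} (f : X ⟶ Y) (g : Y ⟶ Z) :
    ∃ G : C, clsB C (image g) - clsB C (image (f ≫ g)) = clsB C G := by
  refine ⟨cokernel (image.preComp f g), ?_⟩
  rw [clsB_mono (image.preComp f g)]
  abel

lemma clsB_image_map_congr (F : ℝ ⥤ C) {p q q' : ℝ} (h : p ≤ q) (h' : p ≤ q')
    (hq : q = q') :
    clsB C (image (F.map (homOfLE h))) = clsB C (image (F.map (homOfLE h'))) := by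
  subst hq; rfl

lemma F_map_comp (F : ℝ ⥤ C) {a b c : ℝ} (hab : a ≤ b) (hbc : b ≤ c) (hac : a ≤ c) :
    F.map (homOfLE hac) = F.map (homOfLE hab) ≫ F.map (homOfLE hbc) := by
  rw [← F.map_comp]; rfl

lemma dFB_mkI_in (n : ℕ) (s : ℕ → ℝ) (δ : ℝ) (F : ℝ ⥤ C) {p q : ℝ} (hpq : p < q)
    (hex : ∃ i : ℕ, 1 ≤ i ∧ i ≤ n ∧ s i = q) (hle : p ≤ q - δ) :
    dFB C n s δ F (Dgm.mkI p q hpq) = clsB C (image (F.map (homOfLE hle))) := by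
  have h1 : ¬((Dgm.mkI p q hpq).1.2 = ⊤) := by simp [Dgm.mkI]
  have h2 : ∃ i : ℕ, 1 ≤ i ∧ i ≤ n ∧ (s i : EReal) = (Dgm.mkI p q hpq).1.2 := by
    obtain ⟨i, h1i, hin, hq⟩ := hex
    exact ⟨i, h1i, hin, by simp [Dgm.mkI, hq]⟩
  unfold dFB
  rw [if_neg h1, if_pos h2]
  exact clsB_image_map_congr F _ _ (by
    show max p (((q : EReal)).toReal - δ) = q - δ
    rw [EReal.toReal_coe]
    exact max_eq_right hle)

lemma dFB_mkI_out (n : ℕ) (s : ℕ → ℝ) (δ : ℝ) (F : ℝ ⥤ C) {p q : ℝ} (hpq : p < q)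
    (hnex : ¬ ∃ i : ℕ, 1 ≤ i ∧ i ≤ n ∧ s i = q) :
    dFB C n s δ F (Dgm.mkI p q hpq) = clsB C (image (F.map (homOfLE hpq.le))) := by
  have h1 : ¬((Dgm.mkI p q hpq).1.2 = ⊤) := by simp [Dgm.mkI]
  have h2 : ¬ ∃ i : ℕ, 1 ≤ i ∧ i ≤ n ∧ (s i : EReal) = (Dgm.mkI p q hpq).1.2 := by
    intro ⟨i, h1i, hin, hq⟩
    exact hnex ⟨i, h1i, hin, by simpa [Dgm.mkI] using hq⟩
  unfold dFB
  rw [if_neg h1, if_neg h2]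
  exact clsB_image_map_congr F _ _ (by
    show max p (((q : EReal)).toReal) = q
    rw [EReal.toReal_coe]
    exact max_eq_right hpq.le)

lemma dFB_mkInf_eq (n : ℕ) (s : ℕ → ℝ) (δ : ℝ) (F : ℝ ⥤ C) {p : ℝ}
    (hle : p ≤ s (n + 1)) :
    dFB C n s δ F (Dgm.mkInf p) = clsB C (image (F.map (homOfLE hle))) := by
  have ht : (Dgm.mkInf p).1.2 = ⊤ := rfl
  unfold dFB
  rw [if_pos ht]
  exact clsB_image_map_congr F _ _ (max_eq_right hle)

end AuxLemmas

/-- Positivity of the type `B` persistence diagram of an `S`-constructible persistence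
module `F` valued in an abelian category: every value of the Möbius inversion `F_B`
of `d F_B` lies in the positive cone of `B(C)`. -/
theorem typeB_diagram_positive
    (n : ℕ) (hn : 1 ≤ n) (s : ℕ → ℝ) (hs : StrictMono s)
    (δ : ℝ) (hδ : 0 < δ) (hδ' : ∀ i : ℕ, i ≤ n → δ < s (i + 1) - s i)
    (F : ℝ ⥤ C)
    -- `F` is constructible with respect to `S = {s 1 < ⋯ < s n}`:
    (hiso : ∀ (p q : ℝ) (h : p ≤ q), Set.Ioc p q ∩ (s '' Set.Icc 1 n) = ∅ →
      IsIso (F.map (homOfLE h)))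
    (e : C) (he : ∀ p : ℝ, p < s 1 → F.obj p = e)
    (hid : ∀ (p q : ℝ) (h : p ≤ q) (hp : p < s 1) (hq : q < s 1),
      F.map (homOfLE h) = eqToHom ((he p hp).trans (he q hq).symm))
    -- `FB` is the Möbius inversion of `d F_B`:
    (FB : Dgm → BGroup C)
    (hFB1 : ∀ i j : ℕ, 1 ≤ i → ∀ hij : i < j, j ≤ n →
      FB (Dgm.mkI (s i) (s j) (hs hij)) =
        dFB C n s δ F (Dgm.mkI (s i) (s j) (hs hij))
        - dFB C n s δ F (Dgm.mkI (s i) (s (j + 1)) (hs (by omega)))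
        + dFB C n s δ F (Dgm.mkI (s (i - 1)) (s (j + 1)) (hs (by omega)))
        - dFB C n s δ F (Dgm.mkI (s (i - 1)) (s j) (hs (by omega))))
    (hFB2 : ∀ i : ℕ, 1 ≤ i → i ≤ n →
      FB (Dgm.mkInf (s i)) = dFB C n s δ F (Dgm.mkInf (s i)) - dFB C n s δ F (Dgm.mkInf (s (i - 1))))
    (hFB0 : ∀ I : Dgm,
      (¬ ∃ i j : ℕ, 1 ≤ i ∧ i ≤ n ∧ 1 ≤ j ∧ j ≤ n ∧
          ∃ hij : s i < s j, I = Dgm.mkI (s i) (s j) hij) →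
      (¬ ∃ i : ℕ, 1 ≤ i ∧ i ≤ n ∧ I = Dgm.mkInf (s i)) → FB I = 0) :
    ∀ I : Dgm, leB C 0 (FB I) := by
  intro I
  classical
  by_cases hA : ∃ i j : ℕ, 1 ≤ i ∧ i ≤ n ∧ 1 ≤ j ∧ j ≤ n ∧
      ∃ hij : s i < s j, I = Dgm.mkI (s i) (s j) hij
  · obtain ⟨i, j, h1i, hin, h1j, hjn, hij, hI⟩ := hA
    have hij' : i < j := hs.lt_iff_lt.mp hij
    have hIeq : I = Dgm.mkI (s i) (s j) (hs hij') := hI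
    have key := hFB1 i j h1i hij' hjn
    have hab : s (i - 1) ≤ s i := hs.monotone (by omega)
    have hbc : s i ≤ s j - δ := by
      have h1 : s i ≤ s (j - 1) := hs.monotone (by omega)
      have h2 := hδ' (j - 1) (by omega)
      have h3 : j - 1 + 1 = j := by omega
      rw [h3] at h2
      linarith
    have hac : s (i - 1) ≤ s j - δ := hab.trans hbc
    have hexj : ∃ k : ℕ, 1 ≤ k ∧ k ≤ n ∧ s k = s j := ⟨j, h1j, hjn, rfl⟩
    have hcj : s j - δ < s j := by linarith
    by_cases hj : j = n
    · -- right endpoint of the shifted interval is `s (n+1)`, not in `S`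
      have hcd : s j - δ ≤ s (j + 1) := by
        have := hs (show j < j + 1 by omega)
        linarith
      have hbd : s i ≤ s (j + 1) := hbc.trans hcd
      have had : s (i - 1) ≤ s (j + 1) := hab.trans hbd
      have hnex : ¬ ∃ k : ℕ, 1 ≤ k ∧ k ≤ n ∧ s k = s (j + 1) := by
        rintro ⟨k, hk1, hkn, hkeq⟩
        have := hs (show k < j + 1 by omega)
        linarith
      obtain ⟨G, hG⟩ := clsB_quad (F.map (homOfLE hab)) (F.map (homOfLE hbc))
        (F.map (homOfLE hcd))
      rw [← F_map_comp F hbc hcd hbd, ← F_map_comp F hab hbc hac,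
        ← F_map_comp F hac hcd had] at hG
      have hFBval : FB I = clsB C G := by
        rw [hIeq, key, dFB_mkI_in n s δ F _ hexj hbc,
          dFB_mkI_out n s δ F (hs (show i < j + 1 by omega)) hnex,
          dFB_mkI_out n s δ F (hs (show i - 1 < j + 1 by omega)) hnex,
          dFB_mkI_in n s δ F _ hexj hac]
        exact hG
      rw [leB, sub_zero, hFBval]
      exact AddSubmonoid.subset_closure ⟨G, rfl⟩
    · -- right endpoint of the shifted interval is `s (j+1) - δ`, in `S`
      have hjn' : j + 1 ≤ n := by omega
      have hcd : s j - δ ≤ s (j + 1) - δ := by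
        have := hs (show j < j + 1 by omega)
        linarith
      have hbd : s i ≤ s (j + 1) - δ := hbc.trans hcd
      have had : s (i - 1) ≤ s (j + 1) - δ := hab.trans hbd
      have hexj1 : ∃ k : ℕ, 1 ≤ k ∧ k ≤ n ∧ s k = s (j + 1) := ⟨j + 1, by omega, hjn', rfl⟩
      obtain ⟨G, hG⟩ := clsB_quad (F.map (homOfLE hab)) (F.map (homOfLE hbc))
        (F.map (homOfLE hcd))
      rw [← F_map_comp F hbc hcd hbd, ← F_map_comp F hab hbc hac,
        ← F_map_comp F hac hcd had] at hG
      have hFBval : FB I = clsB C G := by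
        rw [hIeq, key, dFB_mkI_in n s δ F _ hexj hbc,
          dFB_mkI_in n s δ F (hs (show i < j + 1 by omega)) hexj1 hbd,
          dFB_mkI_in n s δ F (hs (show i - 1 < j + 1 by omega)) hexj1 had,
          dFB_mkI_in n s δ F _ hexj hac]
        exact hG
      rw [leB, sub_zero, hFBval]
      exact AddSubmonoid.subset_closure ⟨G, rfl⟩
  · by_cases hB : ∃ i : ℕ, 1 ≤ i ∧ i ≤ n ∧ I = Dgm.mkInf (s i)
    · obtain ⟨i, h1i, hin, hI⟩ := hB
      have key := hFB2 i h1i hin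
      have hab : s (i - 1) ≤ s i := hs.monotone (by omega)
      have hbc : s i ≤ s (n + 1) := (hs.monotone (show i ≤ n + 1 by omega))
      have hac : s (i - 1) ≤ s (n + 1) := hab.trans hbc
      obtain ⟨G, hG⟩ := clsB_pair (F.map (homOfLE hab)) (F.map (homOfLE hbc))
      rw [← F_map_comp F hab hbc hac] at hG
      have hFBval : FB I = clsB C G := by
        rw [hI, key, dFB_mkInf_eq n s δ F hbc, dFB_mkInf_eq n s δ F hac]
        exact hG
      rw [leB, sub_zero, hFBval]
      exact AddSubmonoid.subset_closure ⟨G, rfl⟩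
    · rw [hFB0 I hA hB]
      rw [leB, sub_zero]
      exact AddSubmonoid.zero_mem _
end

section
/- Continuity of type B persistence diagrams: for constructible persistence modules F, G valued in an essentially small abelian category C, the erosion distance between their type B persistence diagrams is bounded by their interleaving distance: d_E(F_B, G_B) ≤ d_I(F, G). Concretely, if F and G are ε-interleaved, then for all intervals I ∈ Dgm, dF_B(Grow^ε(I)) ⪯ dG_B(I) and dG_B(Grow^ε(I)) ⪯ dF_B(I) in the ordered Grothendieck group B(C). -/
open CategoryTheory CategoryTheory.Limits
open scoped Classical

/-- `Grow^ε` sends `[p,q)` to `[p-ε, q+ε)` and `[p,∞)` to `[p-ε,∞)`. -/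
noncomputable def Dgm.grow (ε : ℝ) (hε : 0 ≤ ε) (I : Dgm) : Dgm :=
  ⟨(I.1.1 - ε, I.1.2 + (ε : EReal)), by
    calc ((I.1.1 - ε : ℝ) : EReal) ≤ (I.1.1 : EReal) :=
          EReal.coe_le_coe_iff.mpr (sub_le_self _ hε)
      _ < I.1.2 := I.2
      _ ≤ I.1.2 + (ε : EReal) := le_add_of_nonneg_right (by exact_mod_cast hε)⟩

/-- The shift functor on the poset `(ℝ, ≤)` viewed as a category: `r ↦ r + ε`. -/
def Shift (ε : ℝ) : ℝ ⥤ ℝ where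
  obj r := r + ε
  map {r r'} f := homOfLE (show r + ε ≤ r' + ε by have := leOfHom f; linarith)

variable (C : Type) [SmallCategory C] [Abelian C]

section Aux

variable {C : Type} [SmallCategory C] [Abelian C]

lemma clsB_eq_of_iso {X Y : C} (e : X ≅ Y) : clsB C X = clsB C Y := by
  have h : (⟦X⟧ : Cls C) = ⟦Y⟧ := Quotient.sound ⟨e⟩
  simp only [clsB, h]
  rfl

lemma leB_trans {x y z : BGroup C} (h1 : leB C x y) (h2 : leB C y z) : leB C x z := by
  have := AddSubmonoid.add_mem _ h2 h1
  rwa [sub_add_sub_cancel] at this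

lemma clsB_shortExact {S : ShortComplex C} (hS : S.ShortExact) :
    clsB C S.X₂ = clsB C S.X₁ + clsB C S.X₃ := by
  have h : FreeAbelianGroup.of (⟦S.X₂⟧ : Cls C) - FreeAbelianGroup.of ⟦S.X₁⟧ -
      FreeAbelianGroup.of ⟦S.X₃⟧ ∈ AddSubgroup.closure (BRel C) :=
    AddSubgroup.subset_closure ⟨S, hS, rfl⟩
  have h2 : clsB C S.X₂ - clsB C S.X₁ - clsB C S.X₃ = 0 :=
    (QuotientAddGroup.eq_zero_iff (FreeAbelianGroup.of ⟦S.X₂⟧ - FreeAbelianGroup.of ⟦S.X₁⟧ -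
      FreeAbelianGroup.of ⟦S.X₃⟧)).mpr h
  have h3 : clsB C S.X₂ - (clsB C S.X₁ + clsB C S.X₃) = 0 := by
    rw [← h2]; abel
  exact sub_eq_zero.mp h3

lemma leB_of_mono {X Y : C} (f : X ⟶ Y) [Mono f] : leB C (clsB C X) (clsB C Y) := by
  let S : ShortComplex C := ShortComplex.mk f (cokernel.π f) (cokernel.condition f)
  have hS : S.ShortExact :=
    { exact := S.exact_of_g_is_cokernel (cokernelIsCokernel f)
      mono_f := ‹_›
      epi_g := by dsimp [S]; infer_instance }
  have h := clsB_shortExact hS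
  unfold leB
  rw [show clsB C Y - clsB C X = clsB C (cokernel f) by
    dsimp [S] at h; rw [h]; abel]
  exact AddSubmonoid.subset_closure ⟨_, rfl⟩

lemma leB_of_epi {X Y : C} (f : X ⟶ Y) [Epi f] : leB C (clsB C Y) (clsB C X) := by
  let S : ShortComplex C := ShortComplex.mk (kernel.ι f) f (kernel.condition f)
  have hS : S.ShortExact :=
    { exact := S.exact_of_f_is_kernel (kernelIsKernel f)
      mono_f := by dsimp [S]; infer_instance
      epi_g := ‹_› }
  have h := clsB_shortExact hS
  unfold leB
  rw [show clsB C X - clsB C Y = clsB C (kernel f) by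
    dsimp [S] at h; rw [h]; abel]
  exact AddSubmonoid.subset_closure ⟨_, rfl⟩

lemma leB_image_of_fac {X A B Y : C} (u : X ⟶ A) (g : A ⟶ B) (v : B ⟶ Y) :
    leB C (clsB C (image (u ≫ g ≫ v))) (clsB C (image g)) := by
  have h1 : leB C (clsB C (image (u ≫ g))) (clsB C (image g)) :=
    leB_of_mono (image.preComp u g)
  have hfac : u ≫ g ≫ v =
      (factorThruImage (u ≫ g) ≫ factorThruImage (image.ι (u ≫ g) ≫ v)) ≫
        image.ι (image.ι (u ≫ g) ≫ v) := by
    simp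
  haveI : StrongEpi (factorThruImage (u ≫ g) ≫ factorThruImage (image.ι (u ≫ g) ≫ v)) :=
    strongEpi_comp _ _
  have e : image (image.ι (u ≫ g) ≫ v) ≅ image (u ≫ g ≫ v) :=
    image.isoStrongEpiMono _ _ hfac.symm
  rw [(clsB_eq_of_iso e).symm]
  exact leB_trans (leB_of_epi (factorThruImage (image.ι (u ≫ g) ≫ v))) h1

end Aux
section Aux2

variable {C : Type} [SmallCategory C] [Abelian C]

lemma map_comp_eq (H : ℝ ⥤ C) {a b c : ℝ} (hab : a ≤ b) (hbc : b ≤ c) :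
    H.map (homOfLE (hab.trans hbc)) = H.map (homOfLE hab) ≫ H.map (homOfLE hbc) := by
  rw [← H.map_comp, homOfLE_comp]

lemma clsB_image_ext (H : ℝ ⥤ C) {a b c : ℝ} (hab : a ≤ b) (hbc : b ≤ c)
    (hiso : IsIso (H.map (homOfLE hbc))) :
    clsB C (image (H.map (homOfLE (hab.trans hbc)))) = clsB C (image (H.map (homOfLE hab))) := by
  rw [map_comp_eq H hab hbc]
  exact (clsB_eq_of_iso (image.compIso _ _)).symm

lemma interleave_eq {F G : ℝ ⥤ C} {ε : ℝ} (hε : 0 ≤ ε)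
    (φ : F ⟶ Shift ε ⋙ G) (ψ : G ⟶ Shift ε ⋙ F)
    (hφψ : ∀ r : ℝ, φ.app r ≫ ψ.app (r + ε) =
      F.map (homOfLE (show r ≤ r + ε + ε by linarith)))
    (r e : ℝ) (h : r + ε ≤ e) :
    φ.app r ≫ G.map (homOfLE h) ≫ ψ.app e =
      F.map (homOfLE (show r ≤ e + ε by linarith)) := by
  have hnat := ψ.naturality (homOfLE h)
  erw [hnat, ← Category.assoc, hφψ r]
  show F.map _ ≫ F.map ((Shift ε).map (homOfLE h)) = _
  erw [← F.map_comp]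
  congr 1

lemma key {F G : ℝ ⥤ C} {ε : ℝ} (hε : 0 ≤ ε)
    (φ : F ⟶ Shift ε ⋙ G) (ψ : G ⟶ Shift ε ⋙ F)
    (hφψ : ∀ r : ℝ, φ.app r ≫ ψ.app (r + ε) =
      F.map (homOfLE (show r ≤ r + ε + ε by linarith)))
    (p cG e : ℝ) (hp : p ≤ cG) (hcG : cG ≤ e) :
    leB C (clsB C (image (F.map (homOfLE (show p - ε ≤ e + ε by linarith)))))
      (clsB C (image (G.map (homOfLE hp)))) := by
  have h0 : p - ε + ε ≤ e := by linarith
  have hfac : F.map (homOfLE (show p - ε ≤ e + ε by linarith)) =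
      (φ.app (p - ε) ≫ G.map (homOfLE (show p - ε + ε ≤ p by linarith)))
        ≫ G.map (homOfLE hp) ≫ (G.map (homOfLE hcG) ≫ ψ.app e) := by
    rw [← interleave_eq hε φ ψ hφψ (p - ε) e h0]
    erw [map_comp_eq G (show p - ε + ε ≤ p by linarith) (hp.trans hcG),
      map_comp_eq G hp hcG]
    simp only [Category.assoc]
    erw [Category.assoc, Category.assoc]
    rfl
  rw [hfac]
  exact leB_image_of_fac _ _ _

lemma main_step {F G : ℝ ⥤ C} {ε : ℝ} (hε : 0 ≤ ε)
    (φ : F ⟶ Shift ε ⋙ G) (ψ : G ⟶ Shift ε ⋙ F)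
    (hφψ : ∀ r : ℝ, φ.app r ≫ ψ.app (r + ε) =
      F.map (homOfLE (show r ≤ r + ε + ε by linarith)))
    (p cF cG e : ℝ) (h1 : p - ε ≤ cF) (h2 : cF ≤ e + ε) (hp : p ≤ cG) (hcG : cG ≤ e)
    (hiso : IsIso (F.map (homOfLE h2))) :
    leB C (clsB C (image (F.map (homOfLE h1)))) (clsB C (image (G.map (homOfLE hp)))) := by
  rw [← clsB_image_ext F h1 h2 hiso]
  exact key hε φ ψ hφψ p cG e hp hcG

end Aux2
section Aux3

set_option linter.unusedSectionVars false

variable {C : Type} [SmallCategory C] [Abelian C]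

lemma no_crit_between {n : ℕ} {s : ℕ → ℝ} {δ : ℝ} (hs : StrictMono s)
    (hδF : ∀ i : ℕ, i ≤ n → δ < s (i + 1) - s i)
    {i : ℕ} (hin : i ≤ n) {a b : ℝ} (ha : s i - δ ≤ a) (hb : b < s i) :
    Set.Ioc a b ∩ (s '' Set.Icc 1 n) = ∅ := by
  apply Set.eq_empty_iff_forall_notMem.mpr
  rintro x ⟨⟨hx1, hx2⟩, j, ⟨hj1, hjn⟩, rfl⟩
  have hji : j < i := hs.lt_iff_lt.mp (lt_of_le_of_lt hx2 hb)
  have h1 : δ < s (j + 1) - s j := hδF j hjn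
  have h2 : s (j + 1) ≤ s i := hs.monotone hji
  linarith

lemma no_crit_top {n : ℕ} {s : ℕ → ℝ} (hs : StrictMono s)
    {a b : ℝ} (ha : s (n + 1) ≤ a) :
    Set.Ioc a b ∩ (s '' Set.Icc 1 n) = ∅ := by
  apply Set.eq_empty_iff_forall_notMem.mpr
  rintro x ⟨⟨hx1, hx2⟩, j, ⟨hj1, hjn⟩, rfl⟩
  have h1 : s j ≤ s n := hs.monotone hjn
  have h2 : s n < s (n + 1) := hs (Nat.lt_succ_self n)
  linarith

lemma no_crit_degenerate {n : ℕ} {s : ℕ → ℝ} {a b : ℝ} (h : b ≤ a) :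
    Set.Ioc a b ∩ (s '' Set.Icc 1 n) = ∅ := by
  rw [Set.Ioc_eq_empty (not_lt.mpr h), Set.empty_inter]

lemma helper (F G : ℝ ⥤ C)
    (n : ℕ) (s : ℕ → ℝ) (hs : StrictMono s)
    (hFiso : ∀ (p q : ℝ) (h : p ≤ q), Set.Ioc p q ∩ (s '' Set.Icc 1 n) = ∅ →
      IsIso (F.map (homOfLE h)))
    (m : ℕ) (t : ℕ → ℝ)
    (hGiso : ∀ (p q : ℝ) (h : p ≤ q), Set.Ioc p q ∩ (t '' Set.Icc 1 m) = ∅ →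
      IsIso (G.map (homOfLE h)))
    (δ : ℝ) (hδ : 0 < δ) (hδF : ∀ i : ℕ, i ≤ n → δ < s (i + 1) - s i)
    (ε : ℝ) (hε : 0 ≤ ε)
    (φ : F ⟶ Shift ε ⋙ G) (ψ : G ⟶ Shift ε ⋙ F)
    (hφψ : ∀ r : ℝ, φ.app r ≫ ψ.app (r + ε) =
      F.map (homOfLE (show r ≤ r + ε + ε by linarith)))
    (I : Dgm) :
    leB C (dFB C n s δ F (I.grow ε hε)) (dFB C m t δ G I) := by
  obtain ⟨⟨p, qE⟩, hpq⟩ := I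
  by_cases hq : qE = ⊤
  · subst hq
    simp only [dFB, Dgm.grow, EReal.top_add_coe, if_pos]
    set cF := max (p - ε) (s (n + 1)) with hcF
    set cG := max p (t (m + 1)) with hcG
    refine main_step hε φ ψ hφψ p cF cG (max cG (cF - ε)) (le_max_left _ _)
      (by have := le_max_right cG (cF - ε); linarith) (le_max_left _ _) (le_max_left _ _) ?_
    exact hFiso _ _ _ (no_crit_top hs (le_max_right _ _))
  · have hbot : qE ≠ ⊥ := ((EReal.bot_lt_coe p).trans hpq).ne'
    obtain ⟨q, rfl⟩ : ∃ q : ℝ, qE = (q : EReal) := ⟨qE.toReal, (EReal.coe_toReal hq hbot).symm⟩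
    have hpq' : p < q := EReal.coe_lt_coe_iff.mp hpq
    simp only [dFB, Dgm.grow]
    simp only [← EReal.coe_add]
    simp only [EReal.coe_ne_top, ↓reduceIte]
    simp only [EReal.toReal_coe]
    by_cases hcritF : ∃ i, 1 ≤ i ∧ i ≤ n ∧ (s i : EReal) = ((q + ε : ℝ) : EReal)
    · simp only [hcritF, ↓reduceIte]
      obtain ⟨i, hi1, hin, hsi⟩ := hcritF
      have hsi' : s i = q + ε := EReal.coe_eq_coe_iff.mp hsi
      by_cases hcritG : ∃ j, 1 ≤ j ∧ j ≤ m ∧ (t j : EReal) = (q : EReal)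
      · -- B1 : both endpoints critical
        rw [if_pos hcritG]
        refine main_step hε φ ψ hφψ p (max (p - ε) (q + ε - δ)) (max p (q - δ))
          (max p (q - δ)) (le_max_left _ _) ?_ (le_max_left _ _) le_rfl ?_
        · apply max_le
          · have := le_max_left p (q - δ); linarith
          · have := le_max_right p (q - δ); linarith
        · refine hFiso _ _ _ (no_crit_between hs hδF hin ?_ ?_)
          · rw [hsi']; exact le_max_right _ _
          · rw [hsi']
            have h1 : max p (q - δ) < q := max_lt hpq' (by linarith)
            linarith
      · -- B2 : F endpoint critical, G endpoint not critical
        rw [if_neg hcritG]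
        have htq : ∀ j, 1 ≤ j → j ≤ m → t j ≠ q := by
          intro j h1 h2 h3
          exact hcritG ⟨j, h1, h2, by rw [h3]⟩
        obtain ⟨η, hη0, hηδ, hηqp, hηcrit⟩ : ∃ η : ℝ, 0 < η ∧ η ≤ δ ∧ η ≤ q - p ∧
            ∀ j, 1 ≤ j → j ≤ m → t j ∉ Set.Ioc (q - η) q := by
          classical
          set Tf := ((Finset.Icc 1 m).image t).filter (· < q) with hTf
          by_cases hne : Tf.Nonempty
          · refine ⟨min (min δ (q - p)) (q - Tf.max' hne), ?_, ?_, ?_, ?_⟩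
            · have hmem : Tf.max' hne < q := (Finset.mem_filter.mp (Tf.max'_mem hne)).2
              simp only [lt_min_iff]
              exact ⟨⟨hδ, by linarith⟩, by linarith⟩
            · exact le_trans (min_le_left _ _) (min_le_left _ _)
            · exact le_trans (min_le_left _ _) (min_le_right _ _)
            · intro j h1 h2 hmem
              rcases lt_or_ge (t j) q with hlt | hge
              · have hjin : t j ∈ Tf := Finset.mem_filter.mpr
                  ⟨Finset.mem_image.mpr ⟨j, Finset.mem_Icc.mpr ⟨h1, h2⟩, rfl⟩, hlt⟩
                have hle := Tf.le_max' _ hjin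
                have hmin := min_le_right (min δ (q - p)) (q - Tf.max' hne)
                have := hmem.1
                linarith
              · exact htq j h1 h2 (le_antisymm hmem.2 hge)
          · refine ⟨min δ (q - p), lt_min hδ (by linarith), min_le_left _ _,
              min_le_right _ _, ?_⟩
            intro j h1 h2 hmem
            rcases lt_or_ge (t j) q with hlt | hge
            · exact hne ⟨t j, Finset.mem_filter.mpr
                ⟨Finset.mem_image.mpr ⟨j, Finset.mem_Icc.mpr ⟨h1, h2⟩, rfl⟩, hlt⟩⟩
            · exact htq j h1 h2 (le_antisymm hmem.2 hge)
        have hmaxq : max p q = q := max_eq_right hpq'.le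
        have hpqη : p ≤ q - η := by linarith
        have hqηmax : q - η ≤ max p q := by rw [hmaxq]; linarith
        have hisoG : IsIso (G.map (homOfLE hqηmax)) := by
          refine hGiso _ _ _ ?_
          apply Set.eq_empty_iff_forall_notMem.mpr
          rintro x ⟨hx, j, ⟨hj1, hjm⟩, rfl⟩
          rw [hmaxq] at hx
          exact hηcrit j hj1 hjm hx
        rw [clsB_image_ext G hpqη hqηmax hisoG]
        refine main_step hε φ ψ hφψ p (max (p - ε) (q + ε - δ)) (q - η) (q - η)
          (le_max_left _ _) ?_ hpqη le_rfl ?_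
        · apply max_le <;> linarith
        · refine hFiso _ _ _ (no_crit_between hs hδF hin ?_ ?_)
          · rw [hsi']; exact le_max_right _ _
          · rw [hsi']; linarith
    · simp only [hcritF, ↓reduceIte]
      by_cases hcritG : ∃ j, 1 ≤ j ∧ j ≤ m ∧ (t j : EReal) = (q : EReal)
      · -- C1
        rw [if_pos hcritG]
        refine main_step hε φ ψ hφψ p (max (p - ε) (q + ε)) (max p (q - δ)) q
          (le_max_left _ _) (max_le (by linarith) le_rfl) (le_max_left _ _)
          (max_le hpq'.le (by linarith)) ?_
        exact hFiso _ _ _ (no_crit_degenerate (le_max_right _ _))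
      · -- C2
        rw [if_neg hcritG]
        refine main_step hε φ ψ hφψ p (max (p - ε) (q + ε)) (max p q) q
          (le_max_left _ _) (max_le (by linarith) le_rfl) (le_max_left _ _)
          (max_le hpq'.le le_rfl) ?_
        exact hFiso _ _ _ (no_crit_degenerate (le_max_right _ _))

end Aux3
/-- Continuity of type `B` persistence diagrams: if `F` and `G` are `ε`-interleaved
constructible persistence modules valued in an abelian category, then for every interval
`I`, `dF_B(Grow^ε I) ⪯ dG_B(I)` and `dG_B(Grow^ε I) ⪯ dF_B(I)` in the ordered
Grothendieck group `B(C)`; hence the erosion distance between the type `B` persistence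
diagrams of `F` and `G` is at most the interleaving distance between `F` and `G`. -/
theorem typeB_diagram_continuity
    (F G : ℝ ⥤ C)
    -- constructibility data for `F`:
    (n : ℕ) (hn : 1 ≤ n) (s : ℕ → ℝ) (hs : StrictMono s)
    (hFiso : ∀ (p q : ℝ) (h : p ≤ q), Set.Ioc p q ∩ (s '' Set.Icc 1 n) = ∅ →
      IsIso (F.map (homOfLE h)))
    -- constructibility data for `G`:
    (m : ℕ) (hm : 1 ≤ m) (t : ℕ → ℝ) (ht : StrictMono t)
    (hGiso : ∀ (p q : ℝ) (h : p ≤ q), Set.Ioc p q ∩ (t '' Set.Icc 1 m) = ∅ →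
      IsIso (G.map (homOfLE h)))
    -- a sufficiently small `δ > 0`:
    (δ : ℝ) (hδ : 0 < δ)
    (hδF : ∀ i : ℕ, i ≤ n → δ < s (i + 1) - s i)
    (hδG : ∀ i : ℕ, i ≤ m → δ < t (i + 1) - t i)
    -- an `ε`-interleaving between `F` and `G`:
    (ε : ℝ) (hε : 0 ≤ ε)
    (φ : F ⟶ Shift ε ⋙ G) (ψ : G ⟶ Shift ε ⋙ F)
    (hφψ : ∀ r : ℝ, φ.app r ≫ ψ.app (r + ε) =
      F.map (homOfLE (show r ≤ r + ε + ε by linarith)))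
    (hψφ : ∀ r : ℝ, ψ.app r ≫ φ.app (r + ε) =
      G.map (homOfLE (show r ≤ r + ε + ε by linarith))) :
    ∀ I : Dgm,
      leB C (dFB C n s δ F (I.grow ε hε)) (dFB C m t δ G I) ∧
      leB C (dFB C m t δ G (I.grow ε hε)) (dFB C n s δ F I) := by

  intro I
  exact ⟨helper F G n s hs hFiso m t hGiso δ hδ hδF ε hε φ ψ hφψ I,
         helper G F m t ht hGiso n s hFiso δ hδ hδG ε hε ψ φ hψφ I⟩
end
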